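/- Let K be a quadrilateral element and e an edge of K. For any polynomial φ of degree at most k in each variable on K, the squared L² norm of φ restricted to e is bounded by (k+1)²·(|e|/|K|) times the squared L² norm of φ on K. -/

import Mathlib

open Polynomial MeasureTheory intervalIntegral

noncomputable def ip (p : ℝ[X]) : ℝ := ∫ x in (0:ℝ)..1, p.eval x

lemma ii (p : ℝ[X]) : IntervalIntegrable (fun x => p.eval x) volume 0 1 :=
  p.continuous_aeval.intervalIntegrable 0 1

lemma ip_add (p q : ℝ[X]) : ip (p + q) = ip p + ip q := by
  simp only [ip, eval_add]
  exact integral_add (ii p) (ii q)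

lemma ip_Cmul (c : ℝ) (p : ℝ[X]) : ip (C c * p) = c * ip p := by
  simp only [ip, eval_mul, eval_C]
  exact integral_const_mul c _

lemma ip_deriv (p : ℝ[X]) : ip (derivative p) = p.eval 1 - p.eval 0 := by
  rw [ip]
  have h : (deriv fun x => eval x p) = fun x => eval x (derivative p) := by
    funext x; exact Polynomial.deriv (p := p)
  rw [← h]
  exact integral_deriv_eq_sub (fun x _ => p.differentiableAt) (h ▸ ii (derivative p))

lemma ip_parts (p q : ℝ[X]) :
    ip (derivative p * q) = (p*q).eval 1 - (p*q).eval 0 - ip (p * derivative q) := by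
  have h := ip_deriv (p * q)
  rw [derivative_mul, ip_add] at h
  linarith

lemma dvd_iter (c : ℝ) (n : ℕ) (s : ℝ[X]) :
    ∀ m, m ≤ n → ∃ t, derivative^[m] ((X - C c)^n * s) = (X - C c)^(n-m) * t := by
  intro m
  induction m with
  | zero => exact fun _ => ⟨s, by simp⟩
  | succ m ih =>
    intro hm
    obtain ⟨t, ht⟩ := ih (Nat.le_of_succ_le hm)
    refine ⟨C ((n - m : ℕ) : ℝ) * t + (X - C c) * derivative t, ?_⟩
    rw [Function.iterate_succ_apply', ht, derivative_mul, derivative_pow, derivative_X_sub_C]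
    have h1 : n - m = (n - (m+1)) + 1 := by omega
    rw [h1]
    push_cast
    ring

lemma eval_boundary (c : ℝ) (n m : ℕ) (s : ℝ[X]) (h : m < n) :
    eval c (derivative^[m] ((X - C c)^n * s)) = 0 := by
  obtain ⟨t, ht⟩ := dvd_iter c n s m h.le
  rw [ht, eval_mul, eval_pow, eval_sub, eval_X, eval_C, sub_self, zero_pow (by omega), zero_mul]

noncomputable def f (n : ℕ) : ℝ[X] := X^n * (X - C 1)^n

lemma f_eval0 (n m : ℕ) (h : m < n) : eval 0 (derivative^[m] (f n)) = 0 := by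
  have hf : f n = (X - C (0:ℝ))^n * (X - C 1)^n := by simp [f]
  rw [hf]; exact eval_boundary 0 n m _ h

lemma f_eval1 (n m : ℕ) (h : m < n) : eval 1 (derivative^[m] (f n)) = 0 := by
  have hf : f n = (X - C (1:ℝ))^n * (X - C 0)^n := by simp [f, mul_comm]
  rw [hf]; exact eval_boundary 1 n m _ h

lemma rep_parts (n : ℕ) :
    ∀ m, m ≤ n → ∀ p : ℝ[X], ip (derivative^[m] (f n) * p) = (-1:ℝ)^m * ip (f n * derivative^[m] p) := by
  intro m
  induction m with
  | zero => intro _ p; simp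
  | succ m ih =>
    intro hm p
    have h1 : ip (derivative^[m+1] (f n) * p) = - ip (derivative^[m] (f n) * derivative p) := by
      rw [Function.iterate_succ_apply', ip_parts]
      rw [eval_mul, eval_mul, f_eval0 n m (by omega), f_eval1 n m (by omega)]
      ring
    rw [h1, ih (Nat.le_of_succ_le hm) (derivative p), ← Function.iterate_succ_apply]
    ring

lemma ip_X_pow (a : ℕ) : ip (X^a : ℝ[X]) = 1/((a:ℝ)+1) := by
  have : ip (X^a : ℝ[X]) = ∫ x in (0:ℝ)..1, x^a := by
    simp [ip]
  rw [this, integral_pow]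
  norm_num

lemma J (b : ℕ) : ∀ a : ℕ, ip (X^a * (X - C 1)^b)
    = (-1:ℝ)^b * a.factorial * b.factorial / (a+b+1).factorial := by
  induction b with
  | zero =>
    intro a
    rw [pow_zero, mul_one, ip_X_pow]
    have h : ((a:ℕ)+0+1) = a + 1 := by omega
    rw [h, Nat.factorial_succ]
    have h2 : (a.factorial : ℝ) > 0 := by positivity
    push_cast
    field_simp
    simp
  | succ b ih =>
    intro a
    have hd : (C ((a:ℝ)+1)) * X^a = derivative (X^(a+1) : ℝ[X]) := by
      rw [derivative_X_pow]
      push_cast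
      simp
    have hder : derivative ((X - C 1 : ℝ[X])^(b+1)) = C ((b:ℝ)+1) * (X - C 1)^b := by
      rw [derivative_pow, derivative_X_sub_C, mul_one]
      push_cast
      simp
    have key : ((a:ℝ)+1) * ip (X^a * (X - C 1)^(b+1))
        = -(((b:ℝ)+1)) * ip (X^(a+1) * (X - C 1)^b) := by
      calc ((a:ℝ)+1) * ip (X^a * (X - C 1)^(b+1))
          = ip (C ((a:ℝ)+1) * (X^a * (X - C 1)^(b+1))) := (ip_Cmul _ _).symm
        _ = ip (derivative (X^(a+1) : ℝ[X]) * (X - C 1)^(b+1)) := by rw [← mul_assoc, hd]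
        _ = eval 1 (X^(a+1) * (X - C 1)^(b+1)) - eval 0 (X^(a+1) * (X - C 1)^(b+1))
            - ip (X^(a+1) * derivative ((X - C 1 : ℝ[X])^(b+1))) := ip_parts _ _
        _ = - ip (X^(a+1) * (C ((b:ℝ)+1) * (X - C 1)^b)) := by
            rw [hder]; simp [eval_mul, eval_pow]
        _ = -(((b:ℝ)+1)) * ip (X^(a+1) * (X - C 1)^b) := by
            rw [mul_left_comm, ip_Cmul]; ring
    have ha : ((a:ℝ)+1) ≠ 0 := by positivity
    have hip : ip (X^a * (X - C 1)^(b+1))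
        = -(((b:ℝ)+1)) * ip (X^(a+1) * (X - C 1)^b) / ((a:ℝ)+1) := by
      rw [eq_div_iff ha]
      linear_combination key
    rw [hip, ih (a+1)]
    have hidx : (a+1)+b+1 = a+(b+1)+1 := by omega
    rw [hidx]
    have hfa : ((a+1).factorial : ℝ) = ((a:ℝ)+1) * a.factorial := by
      rw [Nat.factorial_succ]; push_cast; ring
    have hfb : (((b+1)).factorial : ℝ) = ((b:ℝ)+1) * b.factorial := by
      rw [Nat.factorial_succ]; push_cast; ring
    have hf : ((a+(b+1)+1).factorial : ℝ) > 0 := by positivity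
    rw [hfa, hfb]
    field_simp
    ring

noncomputable def R (n : ℕ) : ℝ[X] := derivative^[n] (f n)

lemma ip_zero : ip 0 = 0 := by simp [ip]

lemma ip_f (n : ℕ) : ip (f n) = (-1:ℝ)^n * (n.factorial)^2 / (2*n+1).factorial := by
  have := J n n
  rw [f, this]
  have h : n + n + 1 = 2*n+1 := by omega
  rw [h]
  ring

lemma orth (n : ℕ) (p : ℝ[X]) (hp : p.natDegree < n) : ip (R n * p) = 0 := by
  rw [R, rep_parts n n le_rfl p, iterate_derivative_eq_zero hp, mul_zero, ip_zero, mul_zero]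

lemma f_monic (n : ℕ) : (f n).Monic := (monic_X_pow n).mul ((monic_X_sub_C 1).pow n)

lemma f_natDegree (n : ℕ) : (f n).natDegree = 2*n := by
  rw [f, natDegree_mul (pow_ne_zero _ X_ne_zero) (pow_ne_zero _ (X_sub_C_ne_zero 1)),
    natDegree_X_pow, natDegree_pow, natDegree_X_sub_C]
  ring

lemma iter2n (n : ℕ) : derivative^[2*n] (f n) = C (((2*n).factorial : ℝ)) := by
  have h1 : (derivative^[2*n] (f n)).natDegree = 0 := by
    have := natDegree_iterate_derivative (f n) (2*n)
    rw [f_natDegree] at this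
    omega
  have h2 := eq_C_of_natDegree_le_zero h1.le
  rw [h2, coeff_iterate_derivative]
  have h3 : (f n).coeff (0 + 2*n) = 1 := by
    rw [zero_add, ← f_natDegree n]
    exact (f_monic n).coeff_natDegree
  rw [h3, zero_add, Nat.descFactorial_self]
  simp

lemma ipRR (n : ℕ) : ip (R n * R n) = ((n.factorial:ℝ))^2 / (2*(n:ℝ)+1) := by
  have h1 : ip (R n * R n) = (-1:ℝ)^n * ip (f n * derivative^[n] (R n)) :=
    rep_parts n n le_rfl (R n)
  have h2 : derivative^[n] (R n) = C (((2*n).factorial : ℝ)) := by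
    rw [R, ← Function.iterate_add_apply]
    have : n + n = 2*n := by omega
    rw [this, iter2n]
  rw [h1, h2, mul_comm (f n), ip_Cmul, ip_f]
  have h4 : ((2*n+1).factorial : ℝ) = (2*(n:ℝ)+1) * ((2*n).factorial : ℝ) := by
    rw [Nat.factorial_succ]; push_cast; ring
  have h5 : (0:ℝ) < ((2*n).factorial : ℝ) := by positivity
  have h6 : (0:ℝ) < 2*(n:ℝ)+1 := by positivity
  rw [h4]
  have hone : (-1:ℝ)^n * (-1:ℝ)^n = 1 := by rw [← mul_pow]; norm_num
  have hmid : ((2*n).factorial:ℝ) * ((-1:ℝ)^n * ((n.factorial:ℝ))^2 / ((2*(n:ℝ)+1) * ((2*n).factorial:ℝ)))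
      = (-1:ℝ)^n * (((n.factorial:ℝ))^2 / (2*(n:ℝ)+1)) := by
    rw [mul_div_assoc', mul_div_assoc']
    rw [div_eq_div_iff (by positivity) (by positivity)]
    ring

  rw [hmid, ← mul_assoc, hone, one_mul]

lemma R_eval1 (n : ℕ) : eval 1 (R n) = n.factorial := by
  rw [R, f, iterate_derivative_mul, eval_finset_sum]
  rw [Finset.sum_eq_single n]
  · rw [Nat.sub_self, Nat.choose_self, one_smul, Function.iterate_zero_apply,
      iterate_derivative_X_sub_pow_self]
    simp
  · intro k hk hkn
    have hlt : n - k > 0 := by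
      simp only [Finset.mem_range] at hk; omega
    rw [eval_smul, eval_mul, iterate_derivative_X_sub_pow, eval_smul, eval_pow]
    simp [zero_pow hlt.ne']
  · intro h; simp at h

lemma R_natDegree (n : ℕ) : (R n).natDegree ≤ n := by
  have := natDegree_iterate_derivative (f n) n
  rw [f_natDegree] at this
  rw [R]; omega

lemma R_coeff (n : ℕ) : (R n).coeff n = ((2*n).descFactorial n : ℝ) := by
  rw [R, coeff_iterate_derivative]
  have h : n + n = 2*n := by omega
  rw [h]
  have h3 : (f n).coeff (2*n) = 1 := by
    rw [← f_natDegree n]; exact (f_monic n).coeff_natDegree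
  rw [h3]
  simp

lemma R_coeff_ne (n : ℕ) : (R n).coeff n ≠ 0 := by
  rw [R_coeff]
  have h : (2*n).descFactorial n = n.factorial * (2*n).choose n := by
    have := Nat.descFactorial_eq_factorial_mul_choose (n + n) n
    simpa [two_mul] using this
  have : 0 < (2*n).descFactorial n := by
    rw [h]
    exact Nat.mul_pos n.factorial_pos (Nat.choose_pos (by omega))
  positivity

noncomputable def L (n : ℕ) : ℝ[X] := C (1/(n.factorial:ℝ)) * R n

lemma L_eval1 (n : ℕ) : eval 1 (L n) = 1 := by
  have : (n.factorial:ℝ) ≠ 0 := by positivity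
  rw [L, eval_mul, eval_C, R_eval1]
  field_simp

lemma L_natDegree (n : ℕ) : (L n).natDegree ≤ n :=
  le_trans (natDegree_C_mul_le _ _) (R_natDegree n)

lemma L_coeff_ne (n : ℕ) : (L n).coeff n ≠ 0 := by
  rw [L, coeff_C_mul]
  have h1 : (n.factorial:ℝ) ≠ 0 := by positivity
  have := R_coeff_ne n
  positivity

lemma ip_LL_diag (n : ℕ) : ip (L n * L n) = 1/(2*(n:ℝ)+1) := by
  rw [L, mul_assoc, ip_Cmul, mul_left_comm, ip_Cmul, ipRR]
  have h1 : (n.factorial:ℝ) ≠ 0 := by positivity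
  have h2 : (2*(n:ℝ)+1) ≠ 0 := by positivity
  field_simp

lemma ip_LL_off {i j : ℕ} (h : i ≠ j) : ip (L i * L j) = 0 := by
  rcases Nat.lt_or_ge j i with hlt | hge
  · rw [L, mul_assoc, ip_Cmul, orth]
    · ring
    · exact lt_of_le_of_lt (L_natDegree j) hlt
  · have hji : i < j := by omega
    rw [mul_comm, L, mul_assoc, ip_Cmul, orth]
    · ring
    · exact lt_of_le_of_lt (L_natDegree i) hji

lemma ip_sum {s : Finset ℕ} (g : ℕ → ℝ[X]) : ip (∑ i ∈ s, g i) = ∑ i ∈ s, ip (g i) := by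
  induction s using Finset.cons_induction with
  | empty => simpa using ip_zero
  | cons a s ha ih => rw [Finset.sum_cons, ip_add, ih, Finset.sum_cons]

noncomputable def Kk (k : ℕ) : ℝ[X] := ∑ i ∈ Finset.range (k+1), C (2*(i:ℝ)+1) * L i

lemma L_zero : L 0 = 1 := by
  have : R 0 = 1 := by simp [R, f]
  rw [L, this]
  simp

lemma ip_L_Kk {m k : ℕ} (hm : m ≤ k) : ip (L m * Kk k) = 1 := by
  rw [Kk, Finset.mul_sum, ip_sum]
  rw [Finset.sum_eq_single m]
  · rw [mul_left_comm, ip_Cmul, ip_LL_diag]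
    have : (2*(m:ℝ)+1) ≠ 0 := by positivity
    field_simp
  · intro i _ hi
    rw [mul_left_comm, ip_Cmul, ip_LL_off (Ne.symm hi), mul_zero]
  · intro h
    exact absurd (Finset.mem_range.mpr (by omega)) h

lemma eval1_eq_ip (k : ℕ) : ∀ n, n ≤ k → ∀ p : ℝ[X], p.natDegree ≤ n →
    eval 1 p = ip (p * Kk k) := by
  intro n
  induction n with
  | zero =>
    intro _ p hp
    obtain ⟨c, rfl⟩ : ∃ c, p = C c := ⟨p.coeff 0, eq_C_of_natDegree_le_zero hp⟩
    rw [eval_C, ip_Cmul]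
    have : ip (Kk k) = 1 := by
      have := ip_L_Kk (Nat.zero_le k)
      rwa [L_zero, one_mul] at this
    rw [this, mul_one]
  | succ n ih =>
    intro hn p hp
    set c := p.coeff (n+1) / (L (n+1)).coeff (n+1) with hc
    set q := p - C c * L (n+1) with hq
    have hq1 : q.coeff (n+1) = 0 := by
      rw [hq, coeff_sub, coeff_C_mul, hc, div_mul_cancel₀ _ (L_coeff_ne (n+1)), sub_self]
    have hqdeg : q.natDegree ≤ n := by
      rw [natDegree_le_iff_coeff_eq_zero]
      intro N hN
      rcases Nat.lt_or_ge (n+1) N with h1 | h1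
      · rw [hq, coeff_sub, coeff_eq_zero_of_natDegree_lt (lt_of_le_of_lt hp h1),
          coeff_C_mul, coeff_eq_zero_of_natDegree_lt (lt_of_le_of_lt (L_natDegree (n+1)) h1)]
        ring
      · have : N = n+1 := by omega
        rw [this]; exact hq1
    have hps : p = q + C c * L (n+1) := by rw [hq]; ring
    rw [hps, eval_add, eval_mul, eval_C, L_eval1, add_mul, ip_add,
      ← ih (by omega) q hqdeg, mul_assoc, ip_Cmul, ip_L_Kk hn]

lemma Kk_natDegree (k : ℕ) : (Kk k).natDegree ≤ k := by
  rw [Kk]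
  apply natDegree_sum_le_of_forall_le
  intro i hi
  exact le_trans (natDegree_C_mul_le _ _)
    (le_trans (L_natDegree i) (by simp at hi; omega))

lemma sum_odds (k : ℕ) : ∑ i ∈ Finset.range (k+1), (2*(i:ℝ)+1) = ((k:ℝ)+1)^2 := by
  induction k with
  | zero => simp
  | succ k ih =>
    rw [Finset.sum_range_succ, ih]
    push_cast
    ring

lemma ip_Kk_Kk (k : ℕ) : ip (Kk k * Kk k) = ((k:ℝ)+1)^2 := by
  rw [← eval1_eq_ip k k le_rfl (Kk k) (Kk_natDegree k), Kk, eval_finset_sum]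
  rw [← sum_odds k]
  apply Finset.sum_congr rfl
  intro i _
  rw [eval_mul, eval_C, L_eval1, mul_one]

lemma ip_sq_nonneg (p : ℝ[X]) : 0 ≤ ip (p * p) := by
  rw [ip]
  apply intervalIntegral.integral_nonneg (by norm_num)
  intro x _
  rw [eval_mul]
  exact mul_self_nonneg _

lemma ip_cauchy (p q : ℝ[X]) (hq : 0 < ip (q * q)) :
    ip (p * q)^2 ≤ ip (p * p) * ip (q * q) := by
  set A := ip (p * p)
  set B := ip (p * q)
  set G := ip (q * q)
  have expand : (C G * p - C B * q) * (C G * p - C B * q)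
      = C (G^2) * (p*p) + C (-(2*G*B)) * (p*q) + C (B^2) * (q*q) := by
    simp only [map_pow, map_neg, map_mul, map_ofNat]
    ring
  have h0 : 0 ≤ ip ((C G * p - C B * q) * (C G * p - C B * q)) := ip_sq_nonneg _
  rw [expand, ip_add, ip_add, ip_Cmul, ip_Cmul, ip_Cmul] at h0
  have h1 : 0 ≤ G * (A * G - B^2) := by nlinarith [h0]
  nlinarith [h1, hq]

theorem trace_1d (k : ℕ) (p : ℝ[X]) (hp : p.natDegree ≤ k) :
    (eval 1 p)^2 ≤ ((k:ℝ)+1)^2 * ∫ x in (0:ℝ)..1, (eval x p)^2 := by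
  have h1 : eval 1 p = ip (p * Kk k) := eval1_eq_ip k k le_rfl p hp
  have h2 : ip (p * Kk k)^2 ≤ ip (p*p) * ip (Kk k * Kk k) := by
    apply ip_cauchy
    rw [ip_Kk_Kk]
    positivity
  have h3 : ip (p * p) = ∫ x in (0:ℝ)..1, (eval x p)^2 := by
    simp [ip, eval_mul, sq]
  rw [h1, ← h3]
  rw [ip_Kk_Kk] at h2
  linarith

theorem trace_1d_scaled (a : ℝ) (ha : 0 < a) (k : ℕ) (p : ℝ[X]) (hp : p.natDegree ≤ k) :
    (eval a p)^2 ≤ ((k:ℝ)+1)^2 / a * ∫ x in (0:ℝ)..a, (eval x p)^2 := by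
  set q := p.comp (C a * X) with hqdef
  have hdq : q.natDegree ≤ k := by
    rw [hqdef, natDegree_comp, natDegree_C_mul_X a ha.ne']
    simpa using hp
  have heval : eval 1 q = eval a p := by
    rw [hqdef, eval_comp, eval_mul, eval_C, eval_X, mul_one]
  have hint : (∫ x in (0:ℝ)..1, (eval x q)^2)
      = a⁻¹ * ∫ x in (0:ℝ)..a, (eval x p)^2 := by
    have hcomp : ∀ x : ℝ, (eval x q)^2 = (fun t => (eval t p)^2) (a * x) := by
      intro x
      rw [hqdef, eval_comp, eval_mul, eval_C, eval_X]
    simp only [hcomp]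
    rw [integral_comp_mul_left (fun t => (eval t p)^2) ha.ne']
    simp [mul_comm]
  have h := trace_1d k q hdq
  rw [heval, hint] at h
  calc (eval a p)^2 ≤ ((k:ℝ)+1)^2 * (a⁻¹ * ∫ x in (0:ℝ)..a, (eval x p)^2) := h
    _ = ((k:ℝ)+1)^2 / a * ∫ x in (0:ℝ)..a, (eval x p)^2 := by ring

open MvPolynomial in
noncomputable def py (P : MvPolynomial (Fin 2) ℝ) (y : ℝ) : ℝ[X] :=
  MvPolynomial.aeval ![Polynomial.X, Polynomial.C y] P

lemma eval_py (P : MvPolynomial (Fin 2) ℝ) (y x : ℝ) :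
    eval x (py P y) = MvPolynomial.eval ![x, y] P := by
  induction P using MvPolynomial.induction_on with
  | C c => simp [py]
  | add p q hp hq => simp [py, map_add, eval_add] at *; rw [hp, hq]
  | mul_X p i hp =>
    rw [py, map_mul, eval_mul, MvPolynomial.eval_mul, MvPolynomial.eval_X, ← hp, py]
    congr 1
    fin_cases i <;> simp

lemma natDegree_py (P : MvPolynomial (Fin 2) ℝ) (y : ℝ) (k : ℕ)
    (h : P.degreeOf 0 ≤ k) : (py P y).natDegree ≤ k := by
  rw [py]
  conv_lhs => rw [P.as_sum]
  rw [map_sum]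
  apply natDegree_sum_le_of_forall_le
  intro d hd
  rw [MvPolynomial.aeval_monomial]
  refine le_trans (natDegree_mul_le) ?_
  have h1 : (algebraMap ℝ ℝ[X] (MvPolynomial.coeff d P)).natDegree = 0 := natDegree_C _
  rw [h1, zero_add]
  refine le_trans (natDegree_prod_le _ _) ?_
  have hsub : d.support ⊆ Finset.univ := Finset.subset_univ _
  refine le_trans (Finset.sum_le_sum_of_subset hsub) ?_
  rw [Fin.sum_univ_two]
  simp only [Matrix.cons_val_zero, Matrix.cons_val_one, Matrix.head_cons, ← C_pow,
    natDegree_C, natDegree_X_pow, add_zero]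
  have h2 : d 0 ≤ P.degreeOf 0 := by
    rw [MvPolynomial.degreeOf_eq_sup]
    exact Finset.le_sup (f := fun m : Fin 2 →₀ ℕ => m 0) hd
  omega

set_option maxHeartbeats 1000000 in
lemma cont2 (P : MvPolynomial (Fin 2) ℝ) :
    Continuous fun z : ℝ × ℝ => MvPolynomial.eval ![z.1, z.2] P := by
  induction P using MvPolynomial.induction_on with
  | C c => simpa using continuous_const
  | add p q hp hq => simp only [map_add]; exact hp.add hq
  | mul_X p i hp =>
    simp only [map_mul, MvPolynomial.eval_X]
    refine hp.mul ?_
    fin_cases i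
    · simpa using continuous_fst
    · simpa using continuous_snd

lemma cont1 (P : MvPolynomial (Fin 2) ℝ) (a : ℝ) :
    Continuous fun y : ℝ => MvPolynomial.eval ![a, y] P := by
  induction P using MvPolynomial.induction_on with
  | C c => simpa using continuous_const
  | add p q hp hq => simp only [map_add]; exact hp.add hq
  | mul_X p i hp =>
    simp only [map_mul, MvPolynomial.eval_X]
    refine hp.mul ?_
    fin_cases i
    · simpa using continuous_const
    · simpa using continuous_id'

set_option maxHeartbeats 1000000 in
theorem discrete_trace_inequality
    (a b : ℝ) (ha : 0 < a) (hb : 0 < b) (k : ℕ)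
    (P : MvPolynomial (Fin 2) ℝ)
    (hdeg : ∀ i : Fin 2, P.degreeOf i ≤ k) :
    (∫ y in Set.Ioo (0:ℝ) b, (MvPolynomial.eval ![a, y] P) ^ 2) ≤
      ((k : ℝ) + 1) ^ 2 * (b / (a * b)) *
        ∫ x in Set.Ioo (0:ℝ) a, ∫ y in Set.Ioo (0:ℝ) b,
          (MvPolynomial.eval ![x, y] P) ^ 2 := by
  set F : ℝ × ℝ → ℝ := fun z => (MvPolynomial.eval ![z.1, z.2] P)^2 with hFdef
  have hF : Continuous F := (cont2 P).pow 2
  have hInt : IntegrableOn F (Set.Ioo 0 a ×ˢ Set.Ioo 0 b) volume :=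
    (hF.continuousOn.integrableOn_compact (isCompact_Icc.prod isCompact_Icc)).mono_set
      (Set.prod_mono Set.Ioo_subset_Icc_self Set.Ioo_subset_Icc_self)
  have hprod : Integrable F
      ((volume.restrict (Set.Ioo (0:ℝ) a)).prod (volume.restrict (Set.Ioo (0:ℝ) b))) := by
    rw [Measure.prod_restrict, ← Measure.volume_eq_prod]
    exact hInt
  have hpt : ∀ y ∈ Set.Ioo (0:ℝ) b, (MvPolynomial.eval ![a,y] P)^2 ≤
      ((k:ℝ)+1)^2/a * ∫ x in Set.Ioo (0:ℝ) a, (MvPolynomial.eval ![x,y] P)^2 := by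
    intro y _
    have h1 := trace_1d_scaled a ha k (py P y) (natDegree_py P y k (hdeg 0))
    rw [eval_py, intervalIntegral.integral_of_le ha.le,
      MeasureTheory.integral_Ioc_eq_integral_Ioo] at h1
    simp only [eval_py] at h1
    exact h1
  have hint1 : IntegrableOn (fun y => (MvPolynomial.eval ![a,y] P)^2) (Set.Ioo (0:ℝ) b) volume := by
    have hc : Continuous fun y : ℝ => (MvPolynomial.eval ![a,y] P)^2 :=
      (cont1 P a).pow 2
    exact (hc.continuousOn.integrableOn_compact isCompact_Icc).mono_set Set.Ioo_subset_Icc_self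
  have hg : Integrable (fun y => ∫ x in Set.Ioo (0:ℝ) a, F (x, y))
      (volume.restrict (Set.Ioo (0:ℝ) b)) := hprod.integral_prod_right
  have hmono := MeasureTheory.setIntegral_mono_on hint1
    (hg.const_mul (((k:ℝ)+1)^2/a)) measurableSet_Ioo hpt
  have hswap : (∫ y in Set.Ioo (0:ℝ) b, ∫ x in Set.Ioo (0:ℝ) a, F (x, y))
      = ∫ x in Set.Ioo (0:ℝ) a, ∫ y in Set.Ioo (0:ℝ) b, F (x, y) :=
    (MeasureTheory.integral_integral_swap (f := fun x y => F (x, y)) hprod).symm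
  have hconstmul : (∫ y in Set.Ioo (0:ℝ) b, ((k:ℝ)+1)^2/a * ∫ x in Set.Ioo (0:ℝ) a, F (x, y))
      = ((k:ℝ)+1)^2/a * ∫ y in Set.Ioo (0:ℝ) b, ∫ x in Set.Ioo (0:ℝ) a, F (x, y) :=
    MeasureTheory.integral_const_mul _ _
  have hc2 : ((k:ℝ)+1)^2 * (b/(a*b)) = ((k:ℝ)+1)^2/a := by
    field_simp
  calc (∫ y in Set.Ioo (0:ℝ) b, (MvPolynomial.eval ![a, y] P) ^ 2)
      ≤ ∫ y in Set.Ioo (0:ℝ) b, ((k:ℝ)+1)^2/a * ∫ x in Set.Ioo (0:ℝ) a, F (x, y) := hmono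
    _ = ((k:ℝ)+1)^2/a * ∫ x in Set.Ioo (0:ℝ) a, ∫ y in Set.Ioo (0:ℝ) b, F (x, y) := by
        rw [hconstmul, hswap]
    _ = ((k : ℝ) + 1) ^ 2 * (b / (a * b)) *
        ∫ x in Set.Ioo (0:ℝ) a, ∫ y in Set.Ioo (0:ℝ) b,
          (MvPolynomial.eval ![x, y] P) ^ 2 := by rw [hc2]
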